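/- Let D ∈ ℂ^{m×m}, C ∈ ℂ^{m×n}, A ∈ ℂ^{n×n}, B ∈ ℂ^{n×m}, and suppose there exists a Hermitian positive semidefinite P ∈ ℂ^{n×n} with P - A* P A = 0, C* - A* P B = 0, and D + D* - B* P B = 0. Then for every z on the unit circle at which (Iₙ - z A) is invertible, the rational matrix function F(z) = D + z C (Iₙ - z A)⁻¹ B satisfies F(z) + F(z)* = 0 (its Hermitian part vanishes on the unit circle). -/

import Mathlib

open Matrix ComplexOrder

/-- Lossless direction of the positive-real lemma: if `P ⪰ 0` satisfies
`P - A* P A = 0`, `C* - A* P B = 0`, `D + D* - B* P B = 0`, then the Hermitian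
part of `F(z) = D + z C (I - zA)⁻¹ B` vanishes on the unit circle (wherever
`I - zA` is invertible). -/
theorem stmt_13 {n m : ℕ} (A : Matrix (Fin n) (Fin n) ℂ)
    (B : Matrix (Fin n) (Fin m) ℂ) (C : Matrix (Fin m) (Fin n) ℂ)
    (D : Matrix (Fin m) (Fin m) ℂ)
    (P : Matrix (Fin n) (Fin n) ℂ) (hP : P.PosSemidef)
    (h1 : P - Aᴴ * P * A = 0)
    (h2 : Cᴴ - Aᴴ * P * B = 0)
    (h3 : D + Dᴴ - Bᴴ * P * B = 0) :
    ∀ z : ℂ, ‖z‖ = 1 → IsUnit (1 - z • A).det →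
      (D + z • (C * (1 - z • A)⁻¹ * B)) +
        (D + z • (C * (1 - z • A)⁻¹ * B))ᴴ = 0 := by
  intro z hz hdet
  set c : ℂ := (starRingEnd ℂ) z with hc
  have hcz : c * z = 1 := by
    have h := Complex.mul_conj z
    rw [hc, mul_comm, h]
    norm_cast
    rw [Complex.normSq_eq_norm_sq, hz]; norm_num
  set N : Matrix (Fin n) (Fin n) ℂ := 1 - z • A with hNdef
  have hNM : N * N⁻¹ = 1 := Matrix.mul_nonsing_inv N hdet
  have hMN : N⁻¹ * N = 1 := Matrix.nonsing_inv_mul N hdet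
  set M : Matrix (Fin n) (Fin n) ℂ := N⁻¹ with hMdef
  have hPH : Pᴴ = P := hP.1
  have hAPA : Aᴴ * P * A = P := by
    have := sub_eq_zero.mp h1; exact this.symm
  have hCt : Cᴴ = Aᴴ * P * B := sub_eq_zero.mp h2
  have hC : C = Bᴴ * P * A := by
    have := congrArg conjTranspose hCt
    simpa [Matrix.conjTranspose_mul, hPH, Matrix.mul_assoc] using this
  have hD : D + Dᴴ = Bᴴ * P * B := sub_eq_zero.mp h3
  have hNH : Nᴴ = 1 - c • Aᴴ := by
    simp [hNdef, Matrix.conjTranspose_sub, Matrix.conjTranspose_smul, hc]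
  have hMHNH : Mᴴ * Nᴴ = 1 := by
    rw [← Matrix.conjTranspose_mul, hNM, Matrix.conjTranspose_one]
  -- key: inner bracket is zero
  have hinner : Nᴴ * P * N + z • (Nᴴ * (P * A)) + c • (Aᴴ * (P * N)) = 0 := by
    rw [hNH, hNdef]
    have expand : (1 - c • Aᴴ) * P * (1 - z • A)
        + z • ((1 - c • Aᴴ) * (P * A)) + c • (Aᴴ * (P * (1 - z • A)))
        = P - (c * z) • (Aᴴ * P * A) := by
      simp only [Matrix.sub_mul, Matrix.mul_sub, Matrix.one_mul, Matrix.mul_one,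
        Matrix.smul_mul, Matrix.mul_smul, smul_sub, smul_smul, Matrix.mul_assoc]
      module
    rw [expand, hcz, one_smul, hAPA, sub_self]
  -- rewrite each term of F + Fᴴ
  have t1 : Bᴴ * P * B = Bᴴ * (Mᴴ * ((Nᴴ * P * N) * (M * B))) := by
    rw [show Mᴴ * ((Nᴴ * P * N) * (M * B)) = (Mᴴ * Nᴴ) * (P * ((N * M) * B)) by
      simp only [Matrix.mul_assoc], hMHNH, hNM, Matrix.one_mul]
    simp [Matrix.mul_assoc]
  have t2 : C * M * B = Bᴴ * (Mᴴ * ((Nᴴ * (P * A)) * (M * B))) := by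
    rw [hC, show Mᴴ * ((Nᴴ * (P * A)) * (M * B)) = (Mᴴ * Nᴴ) * (P * A * (M * B)) by
      simp only [Matrix.mul_assoc], hMHNH, Matrix.one_mul]
    simp only [Matrix.mul_assoc]
  have t3 : Bᴴ * Mᴴ * (Aᴴ * (P * B)) = Bᴴ * (Mᴴ * ((Aᴴ * (P * N)) * (M * B))) := by
    rw [show Mᴴ * ((Aᴴ * (P * N)) * (M * B)) = Mᴴ * (Aᴴ * (P * ((N * M) * B))) by
      simp only [Matrix.mul_assoc], hNM, Matrix.one_mul]
    simp only [Matrix.mul_assoc]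
  have hgoal : (D + z • (C * M * B)) + (D + z • (C * M * B))ᴴ
      = Bᴴ * (Mᴴ * ((Nᴴ * P * N + z • (Nᴴ * (P * A)) + c • (Aᴴ * (P * N))) * (M * B))) := by
    have hFt : (D + z • (C * M * B))ᴴ = Dᴴ + c • (Bᴴ * Mᴴ * (Aᴴ * (P * B))) := by
      simp [Matrix.conjTranspose_add, Matrix.conjTranspose_smul,
        Matrix.conjTranspose_mul, hMdef, hCt, hc, Matrix.mul_assoc]
    rw [hFt]
    have : D + z • (C * M * B) + (Dᴴ + c • (Bᴴ * Mᴴ * (Aᴴ * (P * B))))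
        = (D + Dᴴ) + z • (C * M * B) + c • (Bᴴ * Mᴴ * (Aᴴ * (P * B))) := by abel
    rw [this, hD, t1, t2, t3]
    simp only [Matrix.add_mul, Matrix.mul_add, Matrix.smul_mul, Matrix.mul_smul]
  rw [hgoal, hinner]
  simp
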